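/- Let ψ(r) = 4r - r² for 0 < r ≤ 1 and ψ(r) = 6 - 4/r + 1/r² for r > 1. Define α(r) = (1/2)ψ'(r) + (3/2)ψ(r)/r - r ψ''(r) - (1/2) r² ψ'''(r). Then α(r) > 0 for all r ∈ (0,∞). -/

import Mathlib

open Set Filter

/-- Gluing lemma for a piecewise function whose two pieces agree in value and
derivative at the junction point. -/
private lemma glue_hasDerivAt {f g h : ℝ → ℝ} {d a : ℝ}
    (hh : ∀ x, h x = if x ≤ a then f x else g x)
    (hfg : f a = g a)
    (hf : HasDerivAt f d a) (hg : HasDerivAt g d a) :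
    HasDerivAt h d a := by
  have h1 : HasDerivWithinAt h d (Iic a) a := by
    refine (hf.hasDerivWithinAt).congr (fun x hx => ?_) ?_
    · rw [hh x, if_pos (mem_Iic.mp hx)]
    · rw [hh a, if_pos le_rfl]
  have h2 : HasDerivWithinAt h d (Ici a) a := by
    refine (hg.hasDerivWithinAt).congr (fun x hx => ?_) ?_
    · rw [hh x]
      rcases eq_or_lt_of_le (mem_Ici.mp hx) with h' | h'
      · rw [if_pos h'.symm.le, ← h', hfg]
      · rw [if_neg (not_le.mpr h')]
    · rw [hh a, if_pos le_rfl, hfg]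
  have h3 := h1.union h2
  rwa [Iic_union_Ici, hasDerivWithinAt_univ] at h3

private lemma deriv_piecewise {f g h : ℝ → ℝ} {f' g' : ℝ → ℝ} {a : ℝ}
    (hh : ∀ x, h x = if x ≤ a then f x else g x)
    (hfg : f a = g a)
    (hf : ∀ r, r ≤ a → HasDerivAt f (f' r) r)
    (hg : ∀ r, a ≤ r → HasDerivAt g (g' r) r)
    (hfga : f' a = g' a) :
    ∀ r, deriv h r = if r ≤ a then f' r else g' r := by
  intro r
  rcases lt_trichotomy r a with hr | hr | hr
  · rw [if_pos hr.le]
    have heq : h =ᶠ[nhds r] f :=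
      Filter.eventuallyEq_of_mem (Iio_mem_nhds hr) (fun x hx => by
        rw [hh x, if_pos (le_of_lt hx)])
    rw [heq.deriv_eq]
    exact (hf r hr.le).deriv
  · subst hr
    rw [if_pos le_rfl]
    exact (glue_hasDerivAt hh hfg (hf r le_rfl) (hfga ▸ hg r le_rfl)).deriv
  · rw [if_neg (not_le.mpr hr)]
    have heq : h =ᶠ[nhds r] g :=
      Filter.eventuallyEq_of_mem (Ioi_mem_nhds hr) (fun x hx => by
        rw [hh x, if_neg (not_le.mpr hx)])
    rw [heq.deriv_eq]
    exact (hg r hr.le).deriv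

/-- Positivity of the coefficient `α(r) = ψ'/2 + (3/2)ψ/r - r ψ'' - r²ψ'''/2`
for the Morawetz weight `ψ`. -/
theorem stmt6 (ψ : ℝ → ℝ)
    (hψ : ψ = fun r => if r ≤ 1 then 4*r - r^2 else 6 - 4/r + 1/r^2)
    (α : ℝ → ℝ)
    (hα : α = fun r => (1/2) * deriv ψ r + (3/2) * ψ r / r
        - r * deriv (deriv ψ) r - (1/2) * r^2 * deriv (deriv (deriv ψ)) r) :
    ∀ r ∈ Set.Ioi (0:ℝ), 0 < α r := by
  -- derivative formulas for the two pieces and their derivatives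
  have hfD : ∀ r : ℝ, HasDerivAt (fun x : ℝ => 4*x - x^2) (4 - 2*r) r := by
    intro r
    have h := ((hasDerivAt_id r).const_mul 4).sub (hasDerivAt_pow 2 r)
    refine h.congr_deriv ?_
    push_cast; ring
  have hgD : ∀ r : ℝ, (1:ℝ) ≤ r → HasDerivAt (fun x : ℝ => 6 - 4/x + 1/x^2)
      (4/r^2 - 2/r^3) r := by
    intro r hr
    have hr0 : r ≠ 0 := by intro h; rw [h] at hr; linarith
    have h1 : HasDerivAt (fun x : ℝ => 4/x) ((0*r - 4*1)/r^2) r :=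
      (hasDerivAt_const r 4).div (hasDerivAt_id r) hr0
    have h2 : HasDerivAt (fun x : ℝ => 1/x^2) ((0*r^2 - 1*(2*r^(2-1)))/(r^2)^2) r :=
      (hasDerivAt_const r 1).div (hasDerivAt_pow 2 r) (pow_ne_zero 2 hr0)
    have h := ((hasDerivAt_const r 6).sub h1).add h2
    refine h.congr_deriv ?_
    field_simp
    ring
  have hf1D : ∀ r : ℝ, HasDerivAt (fun x : ℝ => 4 - 2*x) (-2 : ℝ) r := by
    intro r
    have h := (hasDerivAt_const r 4).sub ((hasDerivAt_id r).const_mul 2)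
    refine h.congr_deriv ?_
    ring
  have hg1D : ∀ r : ℝ, (1:ℝ) ≤ r → HasDerivAt (fun x : ℝ => 4/x^2 - 2/x^3)
      (-8/r^3 + 6/r^4) r := by
    intro r hr
    have hr0 : r ≠ 0 := by intro h; rw [h] at hr; linarith
    have h1 : HasDerivAt (fun x : ℝ => 4/x^2) ((0*r^2 - 4*(2*r^(2-1)))/(r^2)^2) r :=
      (hasDerivAt_const r 4).div (hasDerivAt_pow 2 r) (pow_ne_zero 2 hr0)
    have h2 : HasDerivAt (fun x : ℝ => 2/x^3) ((0*r^3 - 2*(3*r^(3-1)))/(r^3)^2) r :=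
      (hasDerivAt_const r 2).div (hasDerivAt_pow 3 r) (pow_ne_zero 3 hr0)
    have h := h1.sub h2
    refine h.congr_deriv ?_
    field_simp
    ring
  have hf2D : ∀ r : ℝ, HasDerivAt (fun _ : ℝ => (-2 : ℝ)) (0 : ℝ) r := fun r =>
    hasDerivAt_const r (-2)
  have hg2D : ∀ r : ℝ, (1:ℝ) ≤ r → HasDerivAt (fun x : ℝ => -8/x^3 + 6/x^4)
      (24/r^4 - 24/r^5) r := by
    intro r hr
    have hr0 : r ≠ 0 := by intro h; rw [h] at hr; linarith
    have h1 : HasDerivAt (fun x : ℝ => -8/x^3) ((0*r^3 - (-8)*(3*r^(3-1)))/(r^3)^2) r :=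
      (hasDerivAt_const r (-8)).div (hasDerivAt_pow 3 r) (pow_ne_zero 3 hr0)
    have h2 : HasDerivAt (fun x : ℝ => 6/x^4) ((0*r^4 - 6*(4*r^(4-1)))/(r^4)^2) r :=
      (hasDerivAt_const r 6).div (hasDerivAt_pow 4 r) (pow_ne_zero 4 hr0)
    have h := h1.add h2
    refine h.congr_deriv ?_
    field_simp
    ring
  -- first derivative of ψ
  have hD1 : ∀ r : ℝ, deriv ψ r = if r ≤ 1 then 4 - 2*r else 4/r^2 - 2/r^3 := by
    apply deriv_piecewise (fun x => by rw [hψ]) (by norm_num)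
      (fun r _ => hfD r) hgD
    norm_num
  have hD1' : deriv ψ = fun r => if r ≤ 1 then 4 - 2*r else 4/r^2 - 2/r^3 :=
    funext hD1
  -- second derivative
  have hD2 : ∀ r : ℝ, deriv (deriv ψ) r = if r ≤ 1 then (-2:ℝ) else -8/r^3 + 6/r^4 := by
    rw [hD1']
    apply deriv_piecewise (fun x => rfl) (by norm_num)
      (fun r _ => hf1D r) hg1D
    norm_num
  have hD2' : deriv (deriv ψ) = fun r => if r ≤ 1 then (-2:ℝ) else -8/r^3 + 6/r^4 :=
    funext hD2
  -- third derivative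
  have hD3 : ∀ r : ℝ, deriv (deriv (deriv ψ)) r
      = if r ≤ 1 then (0:ℝ) else 24/r^4 - 24/r^5 := by
    rw [hD2']
    apply deriv_piecewise (fun x => rfl) (by norm_num)
      (fun r _ => hf2D r) hg2D
    norm_num
  -- conclusion
  intro r hr
  have hr0 : (0:ℝ) < r := hr
  have hrne : r ≠ 0 := ne_of_gt hr0
  rw [hα]
  simp only []
  rw [hD1 r, hD2 r, hD3 r, show ψ r = if r ≤ 1 then 4*r - r^2 else 6 - 4/r + 1/r^2 from by rw [hψ]]
  by_cases h1 : r ≤ 1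
  · rw [if_pos h1, if_pos h1, if_pos h1, if_pos h1]
    have key : (1/2) * (4 - 2*r) + (3/2) * (4*r - r^2) / r
        - r * (-2) - (1/2) * r^2 * 0 = 8 - r/2 := by
      field_simp
      ring
    rw [key]
    linarith
  · rw [if_neg h1, if_neg h1, if_neg h1, if_neg h1]
    push_neg at h1
    have key : (1/2) * (4/r^2 - 2/r^3) + (3/2) * (6 - 4/r + 1/r^2) / r
        - r * (-8/r^3 + 6/r^4) - (1/2) * r^2 * (24/r^4 - 24/r^5)
        = (9*r^2 - 8*r + 13/2) / r^3 := by
      field_simp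
      ring
    rw [key]
    apply div_pos
    · nlinarith
    · positivity
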